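/- Let X be a Weibull random variable with shape α and scale β > 0 and M_X(t) = E[exp(tX)]. If α = 1, then for all |t| < 1/β one has M_X(t) = 1/(1 - βt). If α > 1, then for all t ∈ ℝ the expectation E[exp(tX)] is finite and M_X(t) = Σ_{n=0}^∞ ((βt)^n / n!) Γ(1 + n/α). -/

import Mathlib

open Filter Topology Real MeasureTheory Set

/-- The Weibull probability density function with shape `α` and scale `β`. -/
noncomputable def weibullPDF (α β x : ℝ) : ℝ :=
  (α / β) * (x / β) ^ (α - 1) * Real.exp (-(x / β) ^ α)


lemma gamma_add_le {s h : ℝ} (hs : 0 < s) (h0 : 0 ≤ h) (h1 : h ≤ 1) :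
    Real.Gamma (s + h) ≤ Real.Gamma s * s ^ h := by
  have hG : 0 < Real.Gamma s := Real.Gamma_pos_of_pos hs
  have hG1 : 0 < Real.Gamma (s + 1) := Real.Gamma_pos_of_pos (by linarith)
  have key := Real.convexOn_log_Gamma.2 (Set.mem_Ioi.2 hs)
    (Set.mem_Ioi.2 (by linarith : (0:ℝ) < s + 1)) (by linarith : 0 ≤ 1 - h) h0 (by ring)
  have hx : (1 - h) • s + h • (s + 1) = s + h := by simp [smul_eq_mul]; ring
  rw [hx] at key
  simp only [Function.comp_apply, smul_eq_mul] at key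
  have hGh : 0 < Real.Gamma (s + h) := Real.Gamma_pos_of_pos (by linarith)
  calc Real.Gamma (s + h) = Real.exp (Real.log (Real.Gamma (s + h))) := (Real.exp_log hGh).symm
    _ ≤ Real.exp ((1 - h) * Real.log (Real.Gamma s) + h * Real.log (Real.Gamma (s + 1))) :=
        Real.exp_le_exp.2 key
    _ = Real.Gamma s ^ (1 - h) * Real.Gamma (s + 1) ^ h := by
        rw [Real.exp_add, Real.rpow_def_of_pos hG, Real.rpow_def_of_pos hG1, mul_comm (1-h),
          mul_comm h]
    _ = Real.Gamma s * s ^ h := by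
        rw [Real.Gamma_add_one hs.ne', Real.mul_rpow hs.le hG.le,
          show Real.Gamma s ^ (1 - h) * (s ^ h * Real.Gamma s ^ h)
            = Real.Gamma s ^ (1 - h) * Real.Gamma s ^ h * s ^ h from by ring,
          ← Real.rpow_add hG, sub_add_cancel, Real.rpow_one]

lemma summable_aux {α : ℝ} (hα : 1 < α) {c : ℝ} (hc : 0 ≤ c) :
    Summable (fun n : ℕ => c ^ n / (n.factorial : ℝ) * Real.Gamma (1 + (n : ℝ) / α)) := by
  have hα0 : (0:ℝ) < α := by linarith
  set a : ℕ → ℝ := fun n => c ^ n / (n.factorial : ℝ) * Real.Gamma (1 + (n : ℝ) / α) with ha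
  have hnn : ∀ n, 0 ≤ a n := fun n => by
    have := Real.Gamma_pos_of_pos (show (0:ℝ) < 1 + (n:ℝ)/α by positivity)
    positivity
  refine summable_of_ratio_norm_eventually_le (r := 1/2) (by norm_num) ?_
  have hlim : Tendsto (fun n : ℕ => c * ((n:ℝ) + 1) ^ (1/α - 1)) atTop (𝓝 0) := by
    have h1 : Tendsto (fun x : ℝ => x ^ (1/α - 1)) atTop (𝓝 0) := by
      have := tendsto_rpow_neg_atTop (y := 1 - 1/α) (by
        have : 1/α < 1 := by rw [div_lt_one hα0]; exact hα
        linarith)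
      simpa [neg_sub] using this
    have h2 : Tendsto (fun n : ℕ => (n:ℝ) + 1) atTop atTop :=
      tendsto_natCast_atTop_atTop.atTop_add tendsto_const_nhds
    simpa using (h1.comp h2).const_mul c
  filter_upwards [hlim.eventually_le_const (by norm_num : (0:ℝ) < 1/2) |>.mono (fun n hn => hn),
    eventually_ge_atTop 0] with n hn _
  rw [Real.norm_of_nonneg (hnn _), Real.norm_of_nonneg (hnn _)]
  have hs : (0:ℝ) < 1 + (n:ℝ)/α := by positivity
  have hΓpos : 0 < Real.Gamma (1 + (n:ℝ)/α) := Real.Gamma_pos_of_pos hs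
  have hb : Real.Gamma (1 + ((n:ℝ)+1)/α) ≤ Real.Gamma (1 + (n:ℝ)/α) * ((n:ℝ)+1) ^ (1/α) := by
    have h2 : (1 + (n:ℝ)/α) ^ (1/α) ≤ ((n:ℝ)+1) ^ (1/α) := by
      refine Real.rpow_le_rpow hs.le ?_ (by positivity)
      have : (n:ℝ)/α ≤ (n:ℝ) := div_le_self (Nat.cast_nonneg n) (by linarith)
      linarith
    calc Real.Gamma (1 + ((n:ℝ)+1)/α) = Real.Gamma ((1 + (n:ℝ)/α) + 1/α) := by ring_nf
      _ ≤ Real.Gamma (1+(n:ℝ)/α) * (1+(n:ℝ)/α) ^ (1/α) :=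
          gamma_add_le hs (by positivity) (by rw [div_le_one hα0]; linarith)
      _ ≤ _ := mul_le_mul_of_nonneg_left h2 hΓpos.le
  have hrw : ((n:ℝ)+1) ^ (1/α) = ((n:ℝ)+1) ^ (1/α - 1) * ((n:ℝ)+1) := by
    rw [← Real.rpow_add_one (by positivity : ((n:ℝ)+1) ≠ 0) (1/α - 1), sub_add_cancel]
  have hfac : (0:ℝ) < n.factorial := by positivity
  have key : a (n+1) ≤ (c * ((n:ℝ)+1) ^ (1/α - 1)) * a n := by
    have e1 : a (n+1) = (c * c^n) / (((n:ℝ)+1) * n.factorial)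
        * Real.Gamma (1 + ((n:ℝ)+1)/α) := by
      simp only [ha]
      push_cast [Nat.factorial_succ]
      ring
    rw [e1, ha]
    calc (c*c^n)/(((n:ℝ)+1)*n.factorial) * Real.Gamma (1 + ((n:ℝ)+1)/α)
        ≤ (c*c^n)/(((n:ℝ)+1)*n.factorial)
          * (Real.Gamma (1+(n:ℝ)/α) * ((n:ℝ)+1) ^ (1/α)) :=
          mul_le_mul_of_nonneg_left hb (by positivity)
      _ = c * ((n:ℝ)+1) ^ (1/α-1) * (c^n/n.factorial * Real.Gamma (1+(n:ℝ)/α)) := by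
          rw [hrw, ← div_mul_div_comm,
            show c/((n:ℝ)+1) * ((c:ℝ)^n/n.factorial) * (Real.Gamma (1+(n:ℝ)/α)
                * (((n:ℝ)+1) ^ (1/α - 1) * ((n:ℝ)+1)))
              = (c/((n:ℝ)+1) * ((n:ℝ)+1)) * (((n:ℝ)+1) ^ (1/α-1)
                * ((c:ℝ)^n/n.factorial * Real.Gamma (1+(n:ℝ)/α))) from by ring,
            div_mul_cancel₀ c (by positivity : ((n:ℝ)+1) ≠ 0)]
          ring
  exact key.trans (mul_le_mul_of_nonneg_right hn (hnn n))


lemma weibull_moment (α β : ℝ) (hα : 1 ≤ α) (hβ : 0 < β) (n : ℕ) :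
    IntegrableOn (fun x => x ^ n * weibullPDF α β x) (Set.Ioi 0) volume ∧
    ∫ x in Set.Ioi (0:ℝ), x ^ n * weibullPDF α β x = β ^ n * Real.Gamma (1 + (n:ℝ)/α) := by
  have hα0 : (0:ℝ) < α := lt_of_lt_of_le one_pos hα
  have hβα : (0:ℝ) < β ^ α := Real.rpow_pos_of_pos hβ α
  have hb : (0:ℝ) < (β ^ α)⁻¹ := by positivity
  have hq : (-1:ℝ) < (n:ℝ) + α - 1 := by
    have : (0:ℝ) ≤ (n:ℝ) := Nat.cast_nonneg n
    linarith
  have hEq : ∀ x ∈ Ioi (0:ℝ), x ^ n * weibullPDF α β x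
      = (α / β ^ α) * (x ^ ((n:ℝ) + α - 1) * Real.exp (-(β^α)⁻¹ * x ^ α)) := by
    intro x hx
    have hx0 : (0:ℝ) < x := hx
    have h1 : β ≠ 0 := hβ.ne'
    have h2 : β ^ α ≠ 0 := hβα.ne'
    rw [weibullPDF, Real.div_rpow hx0.le hβ.le, Real.div_rpow hx0.le hβ.le,
      show -(x^α / β^α) = -(β^α)⁻¹ * x^α from by ring,
      show ((n:ℝ) + α - 1) = (n:ℝ) + (α - 1) from by ring,
      Real.rpow_add hx0, Real.rpow_natCast, Real.rpow_sub hβ, Real.rpow_one]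
    field_simp
  constructor
  · have h : IntegrableOn
        (fun x => (α / β ^ α) * (x ^ ((n:ℝ) + α - 1) * Real.exp (-(β^α)⁻¹ * x ^ α)))
        (Ioi 0) volume :=
      ((integrableOn_rpow_mul_exp_neg_mul_rpow hq hα0 hb).const_mul (α / β ^ α))
    exact h.congr_fun (fun x hx => (hEq x hx).symm) measurableSet_Ioi
  · rw [setIntegral_congr_fun measurableSet_Ioi hEq, integral_const_mul,
      integral_rpow_mul_exp_neg_mul_rpow hα0 hq hb,
      show ((n:ℝ) + α - 1) + 1 = (n:ℝ) + α from by ring]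
    have e2 : ((n:ℝ)+α)/α = 1 + (n:ℝ)/α := by field_simp; ring
    have e3 : ((β^α)⁻¹) ^ (-((n:ℝ)+α)/α) = β ^ (n:ℕ) * β ^ α := by
      rw [← Real.rpow_neg hβ.le, ← Real.rpow_natCast β n, ← Real.rpow_add hβ,
        ← Real.rpow_mul hβ.le,
        show -α * (-((n:ℝ)+α)/α) = (n:ℝ) + α from by field_simp]
    rw [e2, e3]
    field_simp

set_option maxHeartbeats 1000000 in
/-- Moment generating function of the Weibull distribution: for `α = 1` it equals
`1/(1 - βt)` for `|t| < 1/β`; for `α > 1` it is finite for all `t` and given by the series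
`Σ (βt)^n/n! Γ(1 + n/α)`. -/
theorem weibullPDF_mgf (α β : ℝ) (hβ : 0 < β) :
    (α = 1 → ∀ t : ℝ, |t| < 1 / β →
      (∫ x in Set.Ioi (0 : ℝ), Real.exp (t * x) * weibullPDF α β x) = 1 / (1 - β * t)) ∧
    (1 < α → ∀ t : ℝ,
      IntegrableOn (fun x => Real.exp (t * x) * weibullPDF α β x) (Set.Ioi 0) ∧
      (∫ x in Set.Ioi (0 : ℝ), Real.exp (t * x) * weibullPDF α β x) =
        ∑' n : ℕ, (β * t) ^ n / (n.factorial : ℝ) * Real.Gamma (1 + (n : ℝ) / α)) := by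
  constructor
  · rintro rfl t ht
    have hb : (0:ℝ) < 1/β - t := by
      have h2 := (abs_lt.1 ht).2
      linarith
    have hEq : ∀ x ∈ Ioi (0:ℝ), Real.exp (t*x) * weibullPDF 1 β x
        = (1/β) * Real.exp (-(1/β - t) * x ^ (1:ℝ)) := by
      intro x hx
      rw [weibullPDF, sub_self, Real.rpow_zero, Real.rpow_one, Real.rpow_one,
        show Real.exp (t*x) * (1/β * 1 * Real.exp (-(x/β)))
          = 1/β * (Real.exp (t*x) * Real.exp (-(x/β))) from by ring,
        ← Real.exp_add]
      congr 2
      field_simp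
      ring
    rw [setIntegral_congr_fun measurableSet_Ioi hEq, integral_const_mul,
      integral_exp_neg_mul_rpow zero_lt_one hb]
    rw [show (-1:ℝ)/1 = -1 from by norm_num, show (1:ℝ)/1 + 1 = 2 from by norm_num,
      Real.Gamma_two, Real.rpow_neg_one, mul_one]
    have h2 : (0:ℝ) < 1 - β*t := by
      have h3 := mul_pos hβ hb
      rw [mul_sub, mul_one_div_cancel hβ.ne'] at h3
      linarith
    field_simp
  · intro hα t
    have hα1 : (1:ℝ) ≤ α := hα.le
    have hf_nonneg : ∀ x ∈ Ioi (0:ℝ), 0 ≤ weibullPDF α β x := by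
      intro x hx
      have hx0 : (0:ℝ) < x := hx
      have h1 : (0:ℝ) ≤ (x/β) ^ (α-1) := Real.rpow_nonneg (by positivity) _
      rw [weibullPDF]
      positivity
    have hmom := fun n => weibull_moment α β hα1 hβ n
    have hFrw : ∀ (s : ℝ) (n : ℕ), (fun x => (s*x)^n / (n.factorial:ℝ) * weibullPDF α β x)
        = fun x => (s^n / (n.factorial:ℝ)) * (x^n * weibullPDF α β x) := by
      intro s n
      funext x
      rw [mul_pow]
      ring
    have hFint : ∀ (s : ℝ) (n : ℕ), IntegrableOn
        (fun x => (s*x)^n / (n.factorial:ℝ) * weibullPDF α β x) (Ioi 0) volume := by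
      intro s n
      rw [hFrw s n]
      exact (hmom n).1.const_mul _
    have hFval : ∀ (s : ℝ) (n : ℕ),
        ∫ x in Ioi (0:ℝ), (s*x)^n / (n.factorial:ℝ) * weibullPDF α β x
        = (β*s)^n / (n.factorial:ℝ) * Real.Gamma (1 + (n:ℝ)/α) := by
      intro s n
      rw [hFrw s n, integral_const_mul, (hmom n).2, mul_pow]
      ring
    have hsum : ∀ s:ℝ, 0 ≤ s →
        Summable (fun n : ℕ => (β*s)^n / (n.factorial:ℝ) * Real.Gamma (1 + (n:ℝ)/α)) :=
      fun s hs => summable_aux hα (by positivity)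
    have hnormval : ∀ n : ℕ,
        (∫ x in Ioi (0:ℝ), ‖(t*x)^n / (n.factorial:ℝ) * weibullPDF α β x‖)
        = (β*|t|)^n / (n.factorial:ℝ) * Real.Gamma (1 + (n:ℝ)/α) := by
      intro n
      rw [← hFval |t| n]
      refine setIntegral_congr_fun measurableSet_Ioi (fun x hx => ?_)
      have hx0 : (0:ℝ) < x := hx
      rw [Real.norm_eq_abs, abs_mul, abs_div, abs_pow, abs_mul, abs_of_pos hx0,
        abs_of_nonneg (hf_nonneg x hx), Nat.abs_cast]
    have hexp : ∀ (s x : ℝ), (∑' n:ℕ, (s*x)^n / (n.factorial:ℝ) * weibullPDF α β x)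
        = Real.exp (s*x) * weibullPDF α β x := by
      intro s x
      rw [tsum_mul_right]
      congr 1
      rw [Real.exp_eq_exp_ℝ, NormedSpace.exp_eq_tsum_div]
    have hval : (∫ x in Ioi (0:ℝ), Real.exp (t*x) * weibullPDF α β x)
        = ∑' n:ℕ, (β*t)^n / (n.factorial:ℝ) * Real.Gamma (1 + (n:ℝ)/α) := by
      have hsumm : Summable (fun n : ℕ =>
          ∫ x in Ioi (0:ℝ), ‖(t*x)^n / (n.factorial:ℝ) * weibullPDF α β x‖) :=
        (hsum |t| (abs_nonneg t)).congr (fun n => (hnormval n).symm)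
      calc (∫ x in Ioi (0:ℝ), Real.exp (t*x) * weibullPDF α β x)
          = ∫ x in Ioi (0:ℝ), ∑' n:ℕ, (t*x)^n / (n.factorial:ℝ) * weibullPDF α β x :=
            setIntegral_congr_fun measurableSet_Ioi (fun x _ => (hexp t x).symm)
        _ = ∑' n:ℕ, ∫ x in Ioi (0:ℝ), (t*x)^n / (n.factorial:ℝ) * weibullPDF α β x :=
            (integral_tsum_of_summable_integral_norm (fun n => hFint t n) hsumm).symm
        _ = _ := tsum_congr (fun n => hFval t n)
    have hcont : ∀ s : ℝ, Continuous (fun x => Real.exp (s*x) * weibullPDF α β x) := by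
      intro s
      have c1 : Continuous fun x:ℝ => (x/β)^(α-1) :=
        Continuous.rpow_const (continuous_id.div_const β) (fun x => Or.inr (by linarith))
      have c2 : Continuous fun x:ℝ => (x/β)^α :=
        Continuous.rpow_const (continuous_id.div_const β) (fun x => Or.inr (by linarith))
      exact (Real.continuous_exp.comp (continuous_const.mul continuous_id)).mul
        (((continuous_const.mul c1)).mul (Real.continuous_exp.comp c2.neg))
    refine ⟨⟨(hcont t).aestronglyMeasurable, ?_⟩, hval⟩
    rw [hasFiniteIntegral_iff_norm]
    have hG : ∀ n:ℕ,
        (∫⁻ x in Ioi (0:ℝ), ENNReal.ofReal ((|t| * x)^n / (n.factorial:ℝ) * weibullPDF α β x))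
        = ENNReal.ofReal ((β*|t|)^n / (n.factorial:ℝ) * Real.Gamma (1 + (n:ℝ)/α)) := by
      intro n
      rw [← MeasureTheory.ofReal_integral_eq_lintegral_ofReal (hFint |t| n)
        ((ae_restrict_iff' measurableSet_Ioi).2 (Filter.Eventually.of_forall (fun x hx =>
          mul_nonneg (div_nonneg (pow_nonneg (mul_nonneg (abs_nonneg t)
            (le_of_lt (Set.mem_Ioi.1 hx))) n) (Nat.cast_nonneg _)) (hf_nonneg x hx)))), hFval |t| n]
    calc (∫⁻ x in Ioi (0:ℝ), ENNReal.ofReal ‖Real.exp (t*x) * weibullPDF α β x‖)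
        ≤ ∫⁻ x in Ioi (0:ℝ),
            ∑' n:ℕ, ENNReal.ofReal ((|t| * x)^n / (n.factorial:ℝ) * weibullPDF α β x) := by
          apply lintegral_mono_ae
          rw [ae_restrict_iff' measurableSet_Ioi]
          refine Filter.Eventually.of_forall (fun x hx => ?_)
          have hx0 : (0:ℝ) < x := hx
          have hfx := hf_nonneg x hx
          have hle : Real.exp (t*x) * weibullPDF α β x
              ≤ Real.exp (|t| * x) * weibullPDF α β x :=
            mul_le_mul_of_nonneg_right (Real.exp_le_exp.2
              (mul_le_mul_of_nonneg_right (le_abs_self t) hx0.le)) hfx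
          have hsummx : Summable (fun n:ℕ => (|t| * x)^n / (n.factorial:ℝ) * weibullPDF α β x) :=
            (Real.summable_pow_div_factorial (|t| * x)).mul_right _
          calc ENNReal.ofReal ‖Real.exp (t*x) * weibullPDF α β x‖
              = ENNReal.ofReal (Real.exp (t*x) * weibullPDF α β x) := by
                rw [Real.norm_eq_abs, abs_of_nonneg (mul_nonneg (Real.exp_pos _).le hfx)]
            _ ≤ ENNReal.ofReal (Real.exp (|t| * x) * weibullPDF α β x) :=
                ENNReal.ofReal_le_ofReal hle
            _ = ENNReal.ofReal (∑' n:ℕ, (|t| * x)^n / (n.factorial:ℝ) * weibullPDF α β x) := by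
                rw [hexp |t| x]
            _ ≤ ∑' n:ℕ, ENNReal.ofReal ((|t| * x)^n / (n.factorial:ℝ) * weibullPDF α β x) := by
                rw [ENNReal.ofReal_tsum_of_nonneg
                  (fun n => mul_nonneg (div_nonneg (pow_nonneg
                    (mul_nonneg (abs_nonneg t) hx0.le) n) (Nat.cast_nonneg _)) hfx) hsummx]
      _ = ∑' n:ℕ, ∫⁻ x in Ioi (0:ℝ),
            ENNReal.ofReal ((|t| * x)^n / (n.factorial:ℝ) * weibullPDF α β x) := by
          refine lintegral_tsum (fun n => ?_)
          have : Continuous fun x => (|t| * x)^n / (n.factorial:ℝ) * weibullPDF α β x := by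
            have c1 : Continuous fun x:ℝ => (x/β)^(α-1) :=
              Continuous.rpow_const (continuous_id.div_const β) (fun x => Or.inr (by linarith))
            have c2 : Continuous fun x:ℝ => (x/β)^α :=
              Continuous.rpow_const (continuous_id.div_const β) (fun x => Or.inr (by linarith))
            exact (((continuous_const.mul continuous_id).pow n).div_const _).mul
              (((continuous_const.mul c1)).mul (Real.continuous_exp.comp c2.neg))
          exact (this.measurable.ennreal_ofReal).aemeasurable
      _ = ∑' n:ℕ, ENNReal.ofReal ((β*|t|)^n / (n.factorial:ℝ) * Real.Gamma (1 + (n:ℝ)/α)) :=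
          tsum_congr hG
      _ = ENNReal.ofReal (∑' n:ℕ, (β*|t|)^n / (n.factorial:ℝ) * Real.Gamma (1 + (n:ℝ)/α)) := by
          rw [ENNReal.ofReal_tsum_of_nonneg (fun n => mul_nonneg (by positivity)
            (Real.Gamma_pos_of_pos (by positivity)).le) (hsum |t| (abs_nonneg t))]
      _ < ⊤ := ENNReal.ofReal_lt_top
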